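/- arXiv:2411.14090 — 2 statements merged into one kernel-verified Lean document; each statement's English description precedes it below -/
import Mathlib

section
/- Let (P, d) be the space of probability measures with finite first moment under the L^1-Wasserstein distance. Suppose Γ: P → P satisfies: there exist constants c₀ ≥ 1, λ₀ > 0 such that for every μ, the measure Γ(μ) satisfies W₁((P_t^μ)*η, Γ(μ)) ≤ c₀ e^{-λ₀ t} W₁(η, Γ(μ)) for all t ≥ 0 and η, and there is a continuous G: [0,∞) → [0,∞) with inf_{t > (log c₀)/λ₀} G(t)/(1 - c₀ e^{-λ₀ t}) < 1 such that W₁((P_t^{μ₁})* Γ(μ₂), Γ(μ₂)) ≤ G(t) W₁(μ₁, μ₂) for all t ≥ 0 and μ₁, μ₂. Then W₁(Γ(μ₁), Γ(μ₂)) ≤ (inf_{t > (log c₀)/λ₀} G(t)/(1 - c₀ e^{-λ₀ t})) · W₁(μ₁, μ₂), i.e., Γ is a contraction, and hence Γ has a unique fixed point μ* in P. -/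
open Real

/-- Theorem 2.1(i), abstracted to a complete metric space: if each `Γ μ` is a fixed
point of the semigroup `P μ t` which is exponentially contracting towards `Γ μ`, and
`W₁((P_t^{μ₁})* Γ(μ₂), Γ(μ₂)) ≤ G(t) W₁(μ₁, μ₂)` with
`inf_{t > log c₀ / lam0} G(t)/(1 - c₀ e^{-lam0 t}) < 1`, then `Γ` is a contraction with that
ratio and has a unique fixed point. -/
theorem stmt0
    {X : Type*} [MetricSpace X] [CompleteSpace X] [Nonempty X]
    (P : X → ℝ → X → X) (Γ : X → X)
    (c₀ lam0 : ℝ) (hc₀ : 1 ≤ c₀) (hlam0 : 0 < lam0)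
    (hfix : ∀ μ : X, ∀ t : ℝ, 0 ≤ t → P μ t (Γ μ) = Γ μ)
    (hcontr : ∀ μ η : X, ∀ t : ℝ, 0 ≤ t →
      dist (P μ t η) (Γ μ) ≤ c₀ * Real.exp (-lam0 * t) * dist η (Γ μ))
    (G : ℝ → ℝ) (hGcont : Continuous G) (hGnonneg : ∀ t, 0 ≤ t → 0 ≤ G t)
    (hG : ∀ μ₁ μ₂ : X, ∀ t : ℝ, 0 ≤ t →
      dist (P μ₁ t (Γ μ₂)) (Γ μ₂) ≤ G t * dist μ₁ μ₂)
    (r : ℝ)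
    (hr : r = sInf {x : ℝ | ∃ t : ℝ, Real.log c₀ / lam0 < t ∧
      x = G t / (1 - c₀ * Real.exp (-lam0 * t))})
    (hr0 : 0 ≤ r) (hr1 : r < 1) :
    (∀ μ₁ μ₂ : X, dist (Γ μ₁) (Γ μ₂) ≤ r * dist μ₁ μ₂) ∧
      (∃! μstar : X, Γ μstar = μstar) := by
  have hc₀pos : (0:ℝ) < c₀ := lt_of_lt_of_le one_pos hc₀
  have hT0 : 0 ≤ Real.log c₀ / lam0 :=
    div_nonneg (Real.log_nonneg hc₀) hlam0.le
  -- for t beyond the threshold, c₀ e^{-λ t} < 1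
  have hlt1 : ∀ t : ℝ, Real.log c₀ / lam0 < t → c₀ * Real.exp (-lam0 * t) < 1 := by
    intro t ht
    have h1 : Real.log c₀ < lam0 * t := by
      rw [div_lt_iff₀ hlam0] at ht; linarith [ht]
    have h2 : Real.exp (-lam0 * t) < Real.exp (-Real.log c₀) := by
      apply Real.exp_lt_exp.mpr; linarith
    have h3 : Real.exp (-Real.log c₀) = 1 / c₀ := by
      rw [Real.exp_neg, Real.exp_log hc₀pos, one_div]
    calc c₀ * Real.exp (-lam0 * t) < c₀ * (1 / c₀) := by
          rw [← h3]; exact (mul_lt_mul_iff_right₀ hc₀pos).mpr h2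
      _ = 1 := by field_simp
  -- the key inequality
  have key : ∀ μ₁ μ₂ : X, ∀ x ∈ {x : ℝ | ∃ t : ℝ, Real.log c₀ / lam0 < t ∧
      x = G t / (1 - c₀ * Real.exp (-lam0 * t))},
      dist (Γ μ₁) (Γ μ₂) ≤ x * dist μ₁ μ₂ := by
    rintro μ₁ μ₂ x ⟨t, ht, rfl⟩
    have htnn : 0 ≤ t := le_trans hT0 ht.le
    have hlt := hlt1 t ht
    have hpos : 0 < 1 - c₀ * Real.exp (-lam0 * t) := by linarith
    have tri : dist (Γ μ₁) (Γ μ₂) ≤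
        dist (P μ₁ t (Γ μ₂)) (Γ μ₁) + dist (P μ₁ t (Γ μ₂)) (Γ μ₂) := by
      rw [dist_comm (P μ₁ t (Γ μ₂)) (Γ μ₁)]
      exact dist_triangle _ _ _
    have h1 := hcontr μ₁ (Γ μ₂) t htnn
    have h2 := hG μ₁ μ₂ t htnn
    rw [dist_comm (Γ μ₂) (Γ μ₁)] at h1
    rw [div_mul_eq_mul_div, le_div_iff₀ hpos]
    nlinarith [tri, h1, h2]
  -- the set is nonempty
  have hne : ({x : ℝ | ∃ t : ℝ, Real.log c₀ / lam0 < t ∧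
      x = G t / (1 - c₀ * Real.exp (-lam0 * t))}).Nonempty :=
    ⟨G (Real.log c₀ / lam0 + 1) / (1 - c₀ * Real.exp (-lam0 * (Real.log c₀ / lam0 + 1))),
      Real.log c₀ / lam0 + 1, by linarith, rfl⟩
  have hlip : ∀ μ₁ μ₂ : X, dist (Γ μ₁) (Γ μ₂) ≤ r * dist μ₁ μ₂ := by
    intro μ₁ μ₂
    rcases eq_or_ne μ₁ μ₂ with h | h
    · simp [h]
    · have hd : 0 < dist μ₁ μ₂ := dist_pos.mpr h
      have : dist (Γ μ₁) (Γ μ₂) / dist μ₁ μ₂ ≤ r := by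
        rw [hr]
        apply le_csInf hne
        intro x hx
        rw [div_le_iff₀ hd]
        exact key μ₁ μ₂ x hx
      calc dist (Γ μ₁) (Γ μ₂) = dist (Γ μ₁) (Γ μ₂) / dist μ₁ μ₂ * dist μ₁ μ₂ := by
            field_simp
        _ ≤ r * dist μ₁ μ₂ := by
            exact mul_le_mul_of_nonneg_right this hd.le
  refine ⟨hlip, ?_⟩
  have hcw : ContractingWith r.toNNReal Γ := by
    constructor
    · exact_mod_cast Real.toNNReal_lt_one.mpr hr1
    · apply LipschitzWith.of_dist_le_mul
      intro x y
      rw [Real.coe_toNNReal r hr0]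
      exact hlip x y
  exact ⟨hcw.fixedPoint, hcw.fixedPoint_isFixedPt,
    fun y hy => hcw.fixedPoint_unique hy⟩
end

section
/- Let (X, d) be a metric space and for t ≥ 0 let P_t : X → X and Q_t : X → X be maps with the semigroup property P_{t+s} = P_t ∘ P_s. Let ν ∈ X satisfy Q_t ν = ν for all t. Assume there are constants c₀ ≥ 1, λ₀ > 0 with d(Q_t η, ν) ≤ c₀ e^{-λ₀ t} d(η, ν) for all η, t, and there are t₁ > 0 and a continuous H : [0, t₁] → [0,∞) with H(t₁) + c₀ e^{-λ₀ t₁} < 1 and d(P_t η, Q_t η) ≤ H(t) d(η, ν) for all η and t ∈ [0, t₁]. Then there exist constants c, λ > 0 such that d(P_t η, ν) ≤ c e^{-λ t} d(η, ν) for all t ≥ 0 and all η ∈ X. -/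
open Real

/-- Theorem 2.1(ii), abstract form: if `Q` is an exponentially contracting semigroup with
invariant point `ν`, `P` has the semigroup property and stays close to `Q` on `[0, t₁]`
with `H(t₁) + c₀ e^{-λ₀ t₁} < 1`, then `P_t η` converges exponentially fast to `ν`. -/
theorem stmt1
    {X : Type*} [MetricSpace X]
    (P Q : ℝ → X → X) (ν : X)
    (hsemi : ∀ t s : ℝ, 0 ≤ t → 0 ≤ s → P (t + s) = P t ∘ P s)
    (hinv : ∀ t : ℝ, 0 ≤ t → Q t ν = ν)
    (c₀ lam0 : ℝ) (hc₀ : 1 ≤ c₀) (hlam0 : 0 < lam0)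
    (hQ : ∀ η : X, ∀ t : ℝ, 0 ≤ t →
      dist (Q t η) ν ≤ c₀ * Real.exp (-lam0 * t) * dist η ν)
    (t₁ : ℝ) (ht₁ : 0 < t₁)
    (H : ℝ → ℝ) (hHcont : ContinuousOn H (Set.Icc 0 t₁))
    (hHnonneg : ∀ t ∈ Set.Icc (0:ℝ) t₁, 0 ≤ H t)
    (hsmall : H t₁ + c₀ * Real.exp (-lam0 * t₁) < 1)
    (hPQ : ∀ η : X, ∀ t ∈ Set.Icc (0:ℝ) t₁, dist (P t η) (Q t η) ≤ H t * dist η ν) :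
    ∃ c lam : ℝ, 0 < c ∧ 0 < lam ∧
      ∀ η : X, ∀ t : ℝ, 0 ≤ t → dist (P t η) ν ≤ c * Real.exp (-lam * t) * dist η ν := by
  classical
  set g : ℝ → ℝ := fun t => H t + c₀ * Real.exp (-lam0 * t) with hg
  -- basic bound on [0, t₁]
  have hstep : ∀ η : X, ∀ t ∈ Set.Icc (0:ℝ) t₁, dist (P t η) ν ≤ g t * dist η ν := by
    intro η t ht
    calc dist (P t η) ν ≤ dist (P t η) (Q t η) + dist (Q t η) ν := dist_triangle _ _ _
      _ ≤ H t * dist η ν + c₀ * Real.exp (-lam0 * t) * dist η ν :=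
          add_le_add (hPQ η t ht) (hQ η t ht.1)
      _ = g t * dist η ν := by ring
  -- maximum of g on [0,t₁]
  have hgcont : ContinuousOn g (Set.Icc 0 t₁) := by
    apply hHcont.add
    exact (Continuous.continuousOn (by continuity))
  obtain ⟨x, hx, hmax⟩ := isCompact_Icc.exists_isMaxOn (Set.nonempty_Icc.2 ht₁.le) hgcont
  set K := g x with hK
  have hK1 : (1:ℝ) ≤ K := by
    have h0 : g 0 ≤ K := hmax (Set.left_mem_Icc.2 ht₁.le)
    have : (1:ℝ) ≤ g 0 := by
      have := hHnonneg 0 (Set.left_mem_Icc.2 ht₁.le)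
      simp only [hg, mul_zero, neg_zero, Real.exp_zero, mul_one]
      linarith
    linarith
  have hKbound : ∀ η : X, ∀ t ∈ Set.Icc (0:ℝ) t₁, dist (P t η) ν ≤ K * dist η ν := by
    intro η t ht
    exact le_trans (hstep η t ht) (mul_le_mul_of_nonneg_right (hmax ht) dist_nonneg)
  -- the contraction factor r
  set r : ℝ := H t₁ + c₀ * Real.exp (-lam0 * t₁) with hr
  have hr0 : 0 < r := by
    have h1 : 0 ≤ H t₁ := hHnonneg t₁ (Set.right_mem_Icc.2 ht₁.le)
    have h2 : 0 < c₀ * Real.exp (-lam0 * t₁) := by positivity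
    linarith
  have hr1 : r < 1 := hsmall
  have hcontr : ∀ η : X, dist (P t₁ η) ν ≤ r * dist η ν :=
    fun η => hstep η t₁ (Set.right_mem_Icc.2 ht₁.le)
  -- iterate bound
  have hiter : ∀ n : ℕ, ∀ η : X, dist ((P t₁)^[n] η) ν ≤ r ^ n * dist η ν := by
    intro n
    induction n with
    | zero => intro η; simp
    | succ n ih =>
      intro η
      rw [Function.iterate_succ_apply']
      calc dist (P t₁ ((P t₁)^[n] η)) ν ≤ r * dist ((P t₁)^[n] η) ν := hcontr _
        _ ≤ r * (r ^ n * dist η ν) := by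
            exact mul_le_mul_of_nonneg_left (ih η) hr0.le
        _ = r ^ (n + 1) * dist η ν := by ring
  -- semigroup decomposition
  have hdecomp : ∀ n : ℕ, ∀ s : ℝ, 0 ≤ s → ∀ η : X,
      P (s + n * t₁) η = P s ((P t₁)^[n] η) := by
    intro n
    induction n with
    | zero => intro s hs η; simp
    | succ n ih =>
      intro s hs η
      have h1 : s + (n + 1 : ℕ) * t₁ = (s + n * t₁) + t₁ := by push_cast; ring
      have h2 : 0 ≤ s + n * t₁ := by positivity
      rw [h1, hsemi (s + n * t₁) t₁ h2 ht₁.le]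
      simp only [Function.comp_apply]
      rw [ih s hs (P t₁ η), Function.iterate_succ_apply]
  -- constants
  refine ⟨K / r, -Real.log r / t₁, by positivity, ?_, ?_⟩
  · have : Real.log r < 0 := Real.log_neg hr0 hr1
    exact div_pos (by linarith) ht₁
  intro η t ht
  set lam := -Real.log r / t₁ with hlam
  set n : ℕ := ⌊t / t₁⌋₊ with hn
  have hnle : (n : ℝ) * t₁ ≤ t := by
    have := Nat.floor_le (div_nonneg ht ht₁.le)
    calc (n : ℝ) * t₁ ≤ (t / t₁) * t₁ := mul_le_mul_of_nonneg_right this ht₁.le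
      _ = t := div_mul_cancel₀ t ht₁.ne'
  have hlt : t < ((n : ℝ) + 1) * t₁ := by
    have := Nat.lt_floor_add_one (t / t₁)
    calc t = (t / t₁) * t₁ := (div_mul_cancel₀ t ht₁.ne').symm
      _ < ((n : ℝ) + 1) * t₁ := mul_lt_mul_of_pos_right (by exact_mod_cast this) ht₁
  set s : ℝ := t - n * t₁ with hs
  have hs0 : 0 ≤ s := by linarith
  have hs1 : s ≤ t₁ := by nlinarith
  have hts : t = s + n * t₁ := by ring
  have key : dist (P t η) ν ≤ K * (r ^ n * dist η ν) := by
    rw [hts, hdecomp n s hs0 η]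
    calc dist (P s ((P t₁)^[n] η)) ν ≤ K * dist ((P t₁)^[n] η) ν :=
          hKbound _ s ⟨hs0, hs1⟩
      _ ≤ K * (r ^ n * dist η ν) :=
          mul_le_mul_of_nonneg_left (hiter n η) (by linarith)
  -- compare r^n with the exponential
  have hrn : r ^ n = Real.exp (-lam * ((n : ℝ) * t₁)) := by
    rw [hlam]
    rw [← Real.exp_log hr0, ← Real.exp_nat_mul]
    congr 1
    field_simp
    rw [Real.log_exp]
  have hexp : r ^ n ≤ Real.exp (-lam * t) / r := by
    rw [hrn]
    have hlam0' : 0 < lam := by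
      have : Real.log r < 0 := Real.log_neg hr0 hr1
      rw [hlam]; exact div_pos (by linarith) ht₁
    have h1 : -lam * ((n:ℝ) * t₁) ≤ -lam * (t - t₁) := by nlinarith
    have h2 : Real.exp (-lam * ((n:ℝ)*t₁)) ≤ Real.exp (-lam * (t - t₁)) := Real.exp_le_exp.2 h1
    have h3 : Real.exp (-lam * (t - t₁)) = Real.exp (-lam * t) * Real.exp (lam * t₁) := by
      rw [← Real.exp_add]; ring_nf
    have h4 : Real.exp (lam * t₁) = 1 / r := by
      rw [hlam]
      have : -Real.log r / t₁ * t₁ = -Real.log r := by field_simp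
      rw [this, Real.exp_neg, Real.exp_log hr0, one_div]
    rw [h3, h4] at h2
    calc Real.exp (-lam * ((n:ℝ)*t₁)) ≤ Real.exp (-lam * t) * (1 / r) := h2
      _ = Real.exp (-lam * t) / r := by ring
  calc dist (P t η) ν ≤ K * (r ^ n * dist η ν) := key
    _ ≤ K * (Real.exp (-lam * t) / r * dist η ν) := by
        apply mul_le_mul_of_nonneg_left _ (by linarith)
        exact mul_le_mul_of_nonneg_right hexp dist_nonneg
    _ = K / r * Real.exp (-lam * t) * dist η ν := by ring
end
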